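/- arXiv:math/0209116 — 3 statements merged into one kernel-verified Lean document; each statement's English description precedes it below -/
import Mathlib

section
/- For every non-archimedean seminorm γ on a finite-dimensional vector space V over a non-archimedean local field K, there exists a basis v₁,…,vₙ of V with respect to which γ is canonical, i.e. γ(λ₁v₁ + ⋯ + λₙvₙ) = max{|λ₁|γ(v₁), …, |λₙ|γ(vₙ)} for all λᵢ ∈ K. -/
/-- A (non-archimedean) seminorm on a `K`-vector space `V`: a nonnegative real-valued
map, not identically zero, homogeneous with respect to the norm on `K`, and
satisfying the ultrametric inequality. -/
structure IsSeminorm (K : Type*) {V : Type*} [NormedField K] [AddCommGroup V] [Module K V]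
    (γ : V → ℝ) : Prop where
  nonneg : ∀ v, 0 ≤ γ v
  exists_ne_zero : ∃ v, γ v ≠ 0
  smul : ∀ (a : K) (v : V), γ (a • v) = ‖a‖ * γ v
  add_le : ∀ v w : V, γ (v + w) ≤ max (γ v) (γ w)

/-- `γ` is canonical with respect to the basis `b`:
`γ (∑ λᵢ • bᵢ) = maxᵢ ‖λᵢ‖ * γ(bᵢ)`. -/
def IsCanonical {K V : Type*} [NormedField K] [AddCommGroup V] [Module K V] {n : ℕ}
    (γ : V → ℝ) (b : Module.Basis (Fin n) K V) : Prop :=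
  ∀ lam : Fin n → K, γ (∑ i, lam i • b i) = ⨆ i, ‖lam i‖ * γ (b i)

/-- Auxiliary: a seminorm without the "not identically zero" condition. -/
structure PreSem (K : Type*) {V : Type*} [NormedField K] [AddCommGroup V] [Module K V]
    (γ : V → ℝ) : Prop where
  nonneg : ∀ v, 0 ≤ γ v
  smul : ∀ (a : K) (v : V), γ (a • v) = ‖a‖ * γ v
  add_le : ∀ v w : V, γ (v + w) ≤ max (γ v) (γ w)

namespace PreSem

variable {K : Type*} [NormedField K] {V : Type*} [AddCommGroup V] [Module K V]
  {γ : V → ℝ} (h : PreSem K γ)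
include h

theorem zero : γ 0 = 0 := by
  have := h.smul 0 0
  simpa using this

theorem neg (v : V) : γ (-v) = γ v := by
  have := h.smul (-1 : K) v
  simpa using this

theorem sub_le (v w : V) : γ (v - w) ≤ max (γ v) (γ w) := by
  rw [sub_eq_add_neg]
  have := h.add_le v (-w)
  rwa [h.neg] at this

theorem add_eq_left {v w : V} (hlt : γ w < γ v) : γ (v + w) = γ v := by
  refine le_antisymm ((h.add_le v w).trans (by simp [hlt.le])) ?_
  by_contra hc
  push_neg at hc
  have h2 : γ v ≤ max (γ (v + w)) (γ w) := by
    have := h.sub_le (v + w) w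
    rwa [add_sub_cancel_right] at this
  rcases max_cases (γ (v + w)) (γ w) with ⟨he, _⟩ | ⟨he, _⟩ <;> rw [he] at h2 <;> linarith

theorem sub_eq_left {v w : V} (hlt : γ w < γ v) : γ (v - w) = γ v := by
  rw [sub_eq_add_neg]
  exact h.add_eq_left (by rwa [h.neg])

end PreSem

section SupHelpers

theorem bddAbove_range_fin {n : ℕ} (f : Fin n → ℝ) : BddAbove (Set.range f) :=
  (Set.finite_range f).bddAbove

theorem le_iSup_fin {n : ℕ} (f : Fin n → ℝ) (i : Fin n) : f i ≤ ⨆ j, f j :=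
  le_ciSup (bddAbove_range_fin f) i

theorem iSup_fin_le {n : ℕ} {f : Fin n → ℝ} {a : ℝ} (h0 : 0 ≤ a) (hf : ∀ i, f i ≤ a) :
    (⨆ i, f i) ≤ a := by
  rcases isEmpty_or_nonempty (Fin n) with hn | hn
  · rw [Real.iSup_of_isEmpty]; exact h0
  · exact ciSup_le hf

theorem iSup_fin_nonneg {n : ℕ} {f : Fin n → ℝ} (hf : ∀ i, 0 ≤ f i) : 0 ≤ ⨆ i, f i := by
  rcases isEmpty_or_nonempty (Fin n) with hn | hn
  · rw [Real.iSup_of_isEmpty]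
  · exact (hf (Classical.arbitrary _)).trans (le_iSup_fin f _)

theorem exists_iSup_eq {n : ℕ} [Nonempty (Fin n)] (f : Fin n → ℝ) :
    ∃ i, (⨆ j, f j) = f i := by
  obtain ⟨i, hi⟩ := Finite.exists_max f
  exact ⟨i, le_antisymm (ciSup_le hi) (le_iSup_fin f i)⟩

theorem iSup_fin_succ {n : ℕ} (f : Fin (n + 1) → ℝ) (hf : ∀ i, 0 ≤ f i) :
    (⨆ i, f i) = max (f 0) (⨆ i : Fin n, f i.succ) := by
  refine le_antisymm (ciSup_le ?_)
    (max_le (le_iSup_fin f 0) (iSup_fin_le (iSup_fin_nonneg fun i => hf i) fun i => le_iSup_fin f i.succ))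
  intro i
  refine Fin.cases ?_ ?_ i
  · exact le_max_left _ _
  · intro j
    exact le_trans (le_iSup_fin (fun j : Fin n => f j.succ) j) (le_max_right _ _)

end SupHelpers

section MainLemmas

variable {K : Type*} [NontriviallyNormedField K]
  {V : Type*} [AddCommGroup V] [Module K V] {γ : V → ℝ}

/-- Existence of a best approximation to `u` from the span of an orthogonal family. -/
theorem exists_min_aux [CompleteSpace K]
    {q : ℝ} (hq : 1 < q) (hdisc : ∀ a : K, a ≠ 0 → ∃ m : ℤ, ‖a‖ = q ^ m)
    (h : PreSem K γ) {n : ℕ} (v : Fin n → V)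
    (hv : ∀ c : Fin n → K, γ (∑ i, c i • v i) = ⨆ i, ‖c i‖ * γ (v i)) (u : V) :
    ∃ c₀ : Fin n → K, ∀ c : Fin n → K,
      γ (u + ∑ i, c₀ i • v i) ≤ γ (u + ∑ i, c i • v i) := by
  rcases isEmpty_or_nonempty (Fin n) with hn | hn
  · exact ⟨0, fun c => le_of_eq (by rw [Subsingleton.elim (0 : Fin n → K) c])⟩
  set f : (Fin n → K) → ℝ := fun c => γ (u + ∑ i, c i • v i) with hf
  by_contra hcon
  push_neg at hcon
  have hbdd : BddBelow (Set.range f) := ⟨0, by rintro x ⟨c, rfl⟩; exact h.nonneg _⟩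
  set d := ⨅ c, f c with hd
  have hdle : ∀ c, d ≤ f c := fun c => ciInf_le hbdd c
  have hdlt : ∀ c, d < f c := by
    intro c
    rcases (hdle c).lt_or_eq with hlt | heq
    · exact hlt
    · exfalso
      obtain ⟨c', hc'⟩ := hcon c
      have h2 : f c' < f c := hc'
      have := hdle c'
      rw [← heq] at h2
      linarith
  have hd0 : 0 ≤ d := le_ciInf fun c => h.nonneg _
  have hsum_sub : ∀ c c' : Fin n → K,
      (u + ∑ i, c i • v i) - (u + ∑ i, c' i • v i) = ∑ i, (c i - c' i) • v i := by
    intro c c'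
    rw [show (∑ i, (c i - c' i) • v i) = (∑ i, c i • v i) - ∑ i, c' i • v i by
      simp [sub_smul, Finset.sum_sub_distrib]]
    abel
  have hdiff : ∀ c c' : Fin n → K,
      γ (∑ i, (c i - c' i) • v i) ≤ max (f c) (f c') := by
    intro c c'
    rw [← hsum_sub c c']
    exact h.sub_le _ _
  have hq0 : (0 : ℝ) < q := lt_trans one_pos hq
  rcases hd0.lt_or_eq with hdpos | hdzero
  -- Case `0 < d`: use discreteness of the value group.
  · have hSD : ∀ c : Fin n → K,
        ∃ i : Fin n, ∃ m : ℤ, γ (v i) ≠ 0 ∧ f c = γ (v i) * q ^ m := by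
      intro c
      obtain ⟨c', hc'⟩ := hcon c
      have h1 : γ ((u + ∑ i, c i • v i) - (u + ∑ i, c' i • v i)) = f c :=
        h.sub_eq_left hc'
      rw [hsum_sub c c',
        show γ (∑ i, (c i - c' i) • v i) = ⨆ i, ‖c i - c' i‖ * γ (v i) from hv _] at h1
      obtain ⟨i, hi⟩ := exists_iSup_eq (fun i => ‖c i - c' i‖ * γ (v i))
      rw [hi] at h1
      have hfc0 : 0 < f c := lt_of_le_of_lt (h.nonneg _) hc'
      have hne : c i - c' i ≠ 0 := by
        intro hzero
        rw [hzero] at h1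
        simp at h1
        rw [← h1] at hfc0
        exact lt_irrefl _ hfc0
      have hγ : γ (v i) ≠ 0 := by
        intro hzero
        rw [hzero, mul_zero] at h1
        rw [← h1] at hfc0
        exact lt_irrefl _ hfc0
      obtain ⟨m, hm⟩ := hdisc _ hne
      exact ⟨i, m, hγ, by rw [← h1, hm, mul_comm]⟩
    -- the relevant values in `(d, q*d)` form a finite set
    have hfin : (Set.Ioo d (q * d) ∩
        {x : ℝ | ∃ i : Fin n, ∃ m : ℤ, γ (v i) ≠ 0 ∧ x = γ (v i) * q ^ m}).Finite := by
      have hsub : (Set.Ioo d (q * d) ∩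
          {x : ℝ | ∃ i : Fin n, ∃ m : ℤ, γ (v i) ≠ 0 ∧ x = γ (v i) * q ^ m}) ⊆
          ⋃ i : Fin n, {x : ℝ | x ∈ Set.Ioo d (q * d) ∧ ∃ m : ℤ, x = γ (v i) * q ^ m} := by
        rintro x ⟨hx, i, m, hne, rfl⟩
        exact Set.mem_iUnion.2 ⟨i, hx, m, rfl⟩
      refine Set.Finite.subset (Set.finite_iUnion fun i => Set.Subsingleton.finite ?_) hsub
      have key : ∀ m m' : ℤ, m < m' →
          γ (v i) * q ^ m ∈ Set.Ioo d (q * d) → γ (v i) * q ^ m' ∈ Set.Ioo d (q * d) → False := by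
        intro m m' hmm hx hy
        have hγpos : 0 < γ (v i) := by
          rcases (h.nonneg (v i)).lt_or_eq with hp | hp
          · exact hp
          · exfalso
            rw [← hp, zero_mul] at hx
            exact absurd hx.1 (not_lt.2 hdpos.le)
        have h1 : q ^ (m + 1) ≤ q ^ m' := zpow_le_zpow_right₀ hq.le (by omega)
        have h2 : γ (v i) * q ^ (m + 1) ≤ γ (v i) * q ^ m' :=
          mul_le_mul_of_nonneg_left h1 hγpos.le
        rw [zpow_add_one₀ (ne_of_gt hq0)] at h2
        have h3 : q * d < γ (v i) * (q ^ m * q) := by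
          have := hx.1
          nlinarith
        have := hy.2
        linarith
      rintro x ⟨hx, m, rfl⟩ y ⟨hy, m', rfl⟩
      rcases lt_trichotomy m m' with hlt | rfl | hlt
      · exact absurd (key m m' hlt hx hy) (fun h => h)
      · rfl
      · exact absurd (key m' m hlt hy hx) (fun h => h)
    have hTsub : (Set.range f ∩ Set.Ioo d (q * d)) ⊆
        (Set.Ioo d (q * d) ∩
          {x : ℝ | ∃ i : Fin n, ∃ m : ℤ, γ (v i) ≠ 0 ∧ x = γ (v i) * q ^ m}) := by
      rintro x ⟨⟨c, rfl⟩, hx⟩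
      exact ⟨hx, hSD c⟩
    have hTne : (Set.range f ∩ Set.Ioo d (q * d)).Nonempty := by
      obtain ⟨c, hc⟩ := exists_lt_of_ciInf_lt
        (show (⨅ c, f c) < q * d by rw [← hd]; exact (lt_mul_iff_one_lt_left hdpos).2 hq)
      exact ⟨f c, ⟨c, rfl⟩, hdlt c, hc⟩
    obtain ⟨t₀, ht₀, htmin⟩ :=
      Set.exists_min_image _ id (hfin.subset hTsub) hTne
    have hlb : ∀ c, t₀ ≤ f c := by
      intro c
      rcases lt_or_ge (f c) (q * d) with hlt | hge
      · exact htmin _ ⟨⟨c, rfl⟩, hdlt c, hlt⟩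
      · exact le_trans (le_of_lt ht₀.2.2) hge
    have h1 : t₀ ≤ d := by rw [hd]; exact le_ciInf hlb
    exact absurd ht₀.2.1 (not_lt.2 h1)
  -- Case `d = 0`: use completeness of `K`.
  · have hseq : ∀ k : ℕ, ∃ c, f c < (1 / 2 : ℝ) ^ k := by
      intro k
      refine exists_lt_of_ciInf_lt ?_
      rw [← hd, ← hdzero]
      positivity
    choose c hc using hseq
    have key : ∀ (i : Fin n) (k : ℕ), ‖c k i - c (k + 1) i‖ * γ (v i) ≤ (1 / 2 : ℝ) ^ k := by
      intro i k
      calc ‖c k i - c (k + 1) i‖ * γ (v i)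
          ≤ ⨆ j, ‖c k j - c (k + 1) j‖ * γ (v j) :=
            le_iSup_fin (fun j => ‖c k j - c (k + 1) j‖ * γ (v j)) i
        _ = γ (∑ j, (c k j - c (k + 1) j) • v j) :=
            (show γ (∑ j, (c k j - c (k + 1) j) • v j)
              = ⨆ j, ‖c k j - c (k + 1) j‖ * γ (v j) from hv _).symm
        _ ≤ max (f (c k)) (f (c (k + 1))) := hdiff _ _
        _ ≤ (1 / 2 : ℝ) ^ k := by
            refine max_le (hc k).le ((hc (k + 1)).le.trans ?_)
            exact pow_le_pow_of_le_one (by norm_num) (by norm_num) (Nat.le_succ k)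
    have hlim : ∀ i : Fin n,
        ∃ L : K, Filter.Tendsto (fun k => ‖c k i - L‖ * γ (v i)) Filter.atTop (nhds 0) := by
      intro i
      by_cases hγ : γ (v i) = 0
      · exact ⟨0, by simpa [hγ] using (tendsto_const_nhds :
          Filter.Tendsto (fun _ : ℕ => (0 : ℝ)) Filter.atTop (nhds 0))⟩
      · have hγpos : 0 < γ (v i) := (h.nonneg _).lt_of_ne (Ne.symm hγ)
        have hcauchy : CauchySeq (fun k => c k i) := by
          refine cauchySeq_of_le_geometric (1 / 2) ((γ (v i))⁻¹) (by norm_num) fun k => ?_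
          rw [dist_eq_norm]
          calc ‖c k i - c (k + 1) i‖ ≤ (1 / 2 : ℝ) ^ k / γ (v i) :=
                (le_div_iff₀ hγpos).2 (key i k)
            _ = (γ (v i))⁻¹ * (1 / 2 : ℝ) ^ k := div_eq_inv_mul _ _
        obtain ⟨L, hL⟩ := cauchySeq_tendsto_of_complete hcauchy
        refine ⟨L, ?_⟩
        have h1 : Filter.Tendsto (fun k => ‖c k i - L‖) Filter.atTop (nhds 0) := by
          have h2 : Filter.Tendsto (fun k => c k i - L) Filter.atTop (nhds 0) :=
            tendsto_sub_nhds_zero_iff.2 hL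
          simpa using h2.norm
        simpa using h1.mul_const (γ (v i))
    choose L hL using hlim
    have hfL : ∀ ε : ℝ, 0 < ε → f L ≤ ε := by
      intro ε hε
      have h1 : ∀ᶠ k : ℕ in Filter.atTop, (1 / 2 : ℝ) ^ k < ε :=
        (tendsto_pow_atTop_nhds_zero_of_lt_one (by norm_num) (by norm_num)).eventually_lt_const hε
      have h2 : ∀ᶠ k : ℕ in Filter.atTop, ∀ i, ‖c k i - L i‖ * γ (v i) < ε :=
        Filter.eventually_all.2 fun i => (hL i).eventually_lt_const hε
      obtain ⟨k, hk1, hk2⟩ := (h1.and h2).exists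
      have hsplit : f L ≤ max (f (c k)) (γ (∑ i, (L i - c k i) • v i)) := by
        have heq : u + ∑ i, L i • v i
            = (u + ∑ i, c k i • v i) + ∑ i, (L i - c k i) • v i := by
          rw [show (∑ i, (L i - c k i) • v i) = (∑ i, L i • v i) - ∑ i, c k i • v i by
            simp [sub_smul, Finset.sum_sub_distrib]]
          abel
        calc f L = γ ((u + ∑ i, c k i • v i) + ∑ i, (L i - c k i) • v i) := by rw [hf]; rw [← heq]
          _ ≤ max (f (c k)) (γ (∑ i, (L i - c k i) • v i)) := h.add_le _ _
      refine hsplit.trans (max_le (le_of_lt (lt_trans (hc k) hk1)) ?_)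
      rw [show γ (∑ i, (L i - c k i) • v i) = ⨆ i, ‖L i - c k i‖ * γ (v i) from hv _]
      refine iSup_fin_le hε.le fun i => ?_
      rw [norm_sub_rev]
      exact (hk2 i).le
    have hle0 : f L ≤ 0 := by
      by_contra hc0
      push_neg at hc0
      linarith [hfL (f L / 2) (by linarith)]
    have := hdlt L
    rw [← hdzero] at this
    linarith

/-- Orthogonality of a best approximation. -/
theorem orth_aux (h : PreSem K γ) {n : ℕ} (v : Fin n → V) (u' : V)
    (hmin : ∀ c : Fin n → K, γ u' ≤ γ (u' + ∑ i, c i • v i))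
    (a : K) (c : Fin n → K) :
    γ (a • u' + ∑ i, c i • v i) = max (‖a‖ * γ u') (γ (∑ i, c i • v i)) := by
  rcases eq_or_ne a 0 with rfl | ha
  · simp only [zero_smul, zero_add, norm_zero, zero_mul]
    exact (max_eq_right (h.nonneg _)).symm
  · have h1 : ‖a‖ * γ u' ≤ γ (a • u' + ∑ i, c i • v i) := by
      have heq : a • u' + ∑ i, c i • v i = a • (u' + ∑ i, (a⁻¹ * c i) • v i) := by
        rw [smul_add, Finset.smul_sum]
        congr 1
        refine Finset.sum_congr rfl fun i _ => ?_
        rw [smul_smul, mul_inv_cancel_left₀ ha]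
      rw [heq, h.smul]
      exact mul_le_mul_of_nonneg_left (hmin _) (norm_nonneg a)
    have h2 : γ (∑ i, c i • v i) ≤ γ (a • u' + ∑ i, c i • v i) := by
      have hs : γ (∑ i, c i • v i) ≤ max (γ (a • u' + ∑ i, c i • v i)) (γ (a • u')) := by
        have hs0 := h.sub_le (a • u' + ∑ i, c i • v i) (a • u')
        rwa [add_sub_cancel_left] at hs0
      rcases max_cases (γ (a • u' + ∑ i, c i • v i)) (γ (a • u')) with ⟨he, _⟩ | ⟨he, _⟩ <;>
        rw [he] at hs
      · exact hs
      · refine hs.trans ?_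
        rw [h.smul]
        exact h1
    refine le_antisymm ?_ (max_le h1 h2)
    have := h.add_le (a • u') (∑ i, c i • v i)
    rwa [h.smul] at this

/-- The main induction: every finite family spans the same subspace as an
orthogonal family. -/
theorem main_aux [CompleteSpace K]
    {q : ℝ} (hq : 1 < q) (hdisc : ∀ a : K, a ≠ 0 → ∃ m : ℤ, ‖a‖ = q ^ m)
    (h : PreSem K γ) :
    ∀ (n : ℕ) (e : Fin n → V),
      ∃ v : Fin n → V,
        Submodule.span K (Set.range v) = Submodule.span K (Set.range e) ∧
        ∀ lam : Fin n → K, γ (∑ i, lam i • v i) = ⨆ i, ‖lam i‖ * γ (v i) := by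
  intro n
  induction n with
  | zero =>
    intro e
    exact ⟨e, rfl, fun lam => by simp [h.zero]⟩
  | succ n ih =>
    intro e
    obtain ⟨v, hspan, hv⟩ := ih (Fin.tail e)
    obtain ⟨c₀, hc₀⟩ := exists_min_aux hq hdisc h v hv (e 0)
    set u' := e 0 + ∑ i, c₀ i • v i with hu'
    have hmin : ∀ c : Fin n → K, γ u' ≤ γ (u' + ∑ i, c i • v i) := by
      intro c
      have heq : u' + ∑ i, c i • v i = e 0 + ∑ i, (c₀ i + c i) • v i := by
        rw [hu', show (∑ i, (c₀ i + c i) • v i) = (∑ i, c₀ i • v i) + ∑ i, c i • v i by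
          simp [add_smul, Finset.sum_add_distrib]]
        abel
      rw [heq, hu']
      exact hc₀ _
    refine ⟨Fin.cons u' v, ?_, ?_⟩
    · rw [Fin.range_cons]
      conv_rhs => rw [← Fin.cons_self_tail e, Fin.range_cons]
      rw [Submodule.span_insert, Submodule.span_insert, hspan]
      have hw : (∑ i, c₀ i • v i) ∈ Submodule.span K (Set.range (Fin.tail e)) := by
        rw [← hspan]
        exact Submodule.sum_mem _ fun i _ =>
          Submodule.smul_mem _ _ (Submodule.subset_span ⟨i, rfl⟩)
      apply le_antisymm
      · refine sup_le ?_ le_sup_right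
        rw [Submodule.span_le, Set.singleton_subset_iff]
        rw [hu']
        exact Submodule.add_mem_sup (Submodule.mem_span_singleton_self _) hw
      · refine sup_le ?_ le_sup_right
        rw [Submodule.span_le, Set.singleton_subset_iff]
        have he0 : e 0 = u' + (-(∑ i, c₀ i • v i)) := by rw [hu']; abel
        rw [he0]
        exact Submodule.add_mem_sup (Submodule.mem_span_singleton_self _) (neg_mem hw)
    · intro lam
      have h1 : γ (∑ i, lam i • (Fin.cons u' v : Fin (n+1) → V) i)
          = max (‖lam 0‖ * γ u') (γ (∑ i : Fin n, lam i.succ • v i)) := by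
        rw [Fin.sum_univ_succ]
        simp only [Fin.cons_zero, Fin.cons_succ]
        exact orth_aux h v u' hmin (lam 0) fun i => lam i.succ
      rw [h1,
        show γ (∑ i : Fin n, lam i.succ • v i) = ⨆ i : Fin n, ‖lam i.succ‖ * γ (v i) from hv _,
        iSup_fin_succ (fun i => ‖lam i‖ * γ ((Fin.cons u' v : Fin (n+1) → V) i))
          (fun i => mul_nonneg (norm_nonneg _) (h.nonneg _))]
      simp only [Fin.cons_zero, Fin.cons_succ]

end MainLemmas

/-- Every seminorm on a finite-dimensional vector space over a non-archimedean local
field (complete, with discrete value group) is canonical with respect to some basis. -/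
theorem exists_canonical_basis_for_seminorm
    {K : Type*} [NontriviallyNormedField K] [IsUltrametricDist K] [CompleteSpace K]
    (q : ℝ) (hq : 1 < q) (hdisc : ∀ a : K, a ≠ 0 → ∃ m : ℤ, ‖a‖ = q ^ m)
    {V : Type*} [AddCommGroup V] [Module K V] [FiniteDimensional K V]
    {n : ℕ} (hn : Module.finrank K V = n)
    (γ : V → ℝ) (h : IsSeminorm K γ) :
    ∃ b : Module.Basis (Fin n) K V, IsCanonical γ b := by
  have hpre : PreSem K γ := ⟨h.nonneg, h.smul, h.add_le⟩
  let b0 : Module.Basis (Fin n) K V := (Module.finBasis K V).reindex (finCongr hn)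
  obtain ⟨v, hspan, hcan⟩ := main_aux hq hdisc hpre n ⇑b0
  have htop : ⊤ ≤ Submodule.span K (Set.range v) := by
    rw [hspan, b0.span_eq]
  have hcard : Fintype.card (Fin n) = Module.finrank K V := by simp [hn]
  refine ⟨basisOfTopLeSpanOfCardEqFinrank v htop hcard, ?_⟩
  intro lam
  rw [coe_basisOfTopLeSpanOfCardEqFinrank]
  exact hcan lam
end

section
/- Fix ε > 0, a vector v ∈ V, a basis v₁,…,vₙ, and a seminorm γ₀ canonical with respect to this basis with γ₀(v) ≠ 0. Then there exist a neighbourhood W of v in V and a neighbourhood Γ of γ₀ in the space of canonical seminorms (pointwise topology) such that |γ(w) − γ₀(w)| < 3ε for all w ∈ W and all γ ∈ Γ canonical with respect to v₁,…,vₙ. -/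
/-- `γ` is canonical with respect to the standard basis of `Kⁿ`. -/
def IsCanonicalStd {K : Type*} [NormedField K] {n : ℕ} (γ : (Fin n → K) → ℝ) : Prop :=
  ∀ lam : Fin n → K, γ lam = ⨆ i, ‖lam i‖ * γ (Pi.single i 1)
/-- Local uniform estimate for canonical seminorms near a point where the reference
seminorm does not vanish. -/
theorem canonical_seminorm_local_estimate
    {K : Type*} [NontriviallyNormedField K] [IsUltrametricDist K] {n : ℕ}
    (ε : ℝ) (hε : 0 < ε) (v : Fin n → K)
    (γ₀ : (Fin n → K) → ℝ) (h₀ : IsSeminorm K γ₀) (hc₀ : IsCanonicalStd γ₀)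
    (hv : γ₀ v ≠ 0) :
    ∃ W ∈ nhds v, ∃ Γ : Set ((Fin n → K) → ℝ), IsOpen Γ ∧ γ₀ ∈ Γ ∧
      ∀ w ∈ W, ∀ γ ∈ Γ, IsSeminorm K γ → IsCanonicalStd γ →
        |γ w - γ₀ w| < 3 * ε := by
  -- `Fin n` is nonempty, since otherwise `γ₀ v = 0`.
  have hne : Nonempty (Fin n) := by
    by_contra h
    rw [not_nonempty_iff] at h
    exact hv (by rw [hc₀ v, Real.iSup_of_isEmpty])
  set e : Fin n → (Fin n → K) := fun i => Pi.single i 1 with he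
  set B := ⨆ i, ‖v i‖ with hB
  have hBdd1 : BddAbove (Set.range fun i => ‖v i‖) := (Set.finite_range _).bddAbove
  have hBle : ∀ i, ‖v i‖ ≤ B := fun i => le_ciSup hBdd1 i
  have hB0 : 0 ≤ B := le_trans (norm_nonneg _) (hBle (Classical.arbitrary _))
  set δ := ε / (B + 1) with hδdef
  have hB1 : 0 < B + 1 := by linarith
  have hδ : 0 < δ := div_pos hε hB1
  refine ⟨Metric.ball v 1, Metric.ball_mem_nhds v one_pos,
    ⋂ i, {γ : (Fin n → K) → ℝ | γ (e i) ∈ Metric.ball (γ₀ (e i)) δ}, ?_, ?_, ?_⟩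
  · exact isOpen_iInter_of_finite fun i =>
      (Metric.isOpen_ball).preimage (continuous_apply (e i))
  · exact Set.mem_iInter.mpr fun i => by simp [Metric.mem_ball, hδ]
  · intro w hw γ hγ hsγ hcγ
    have hγi : ∀ i, |γ (e i) - γ₀ (e i)| < δ := fun i => by
      have := Set.mem_iInter.mp hγ i
      simpa [Metric.mem_ball, Real.dist_eq] using this
    have hwi : ∀ i, ‖w i‖ ≤ B + 1 := by
      intro i
      have h1 : ‖w i - v i‖ ≤ dist w v := by
        rw [← dist_eq_norm]; exact dist_le_pi_dist w v i
      have h2 : dist w v < 1 := Metric.mem_ball.mp hw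
      calc ‖w i‖ = ‖v i + (w i - v i)‖ := by ring_nf
        _ ≤ ‖v i‖ + ‖w i - v i‖ := norm_add_le _ _
        _ ≤ B + 1 := by have := hBle i; linarith
    have key : ∀ i, |‖w i‖ * γ (e i) - ‖w i‖ * γ₀ (e i)| ≤ ε := by
      intro i
      have : |‖w i‖ * γ (e i) - ‖w i‖ * γ₀ (e i)| = ‖w i‖ * |γ (e i) - γ₀ (e i)| := by
        rw [← mul_sub, abs_mul, abs_of_nonneg (norm_nonneg _)]
      rw [this]
      calc ‖w i‖ * |γ (e i) - γ₀ (e i)| ≤ (B + 1) * δ :=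
            mul_le_mul (hwi i) (le_of_lt (hγi i)) (abs_nonneg _) (le_of_lt hB1)
        _ = ε := by rw [hδdef]; field_simp
    have hBddγ : BddAbove (Set.range fun i => ‖w i‖ * γ (e i)) := (Set.finite_range _).bddAbove
    have hBddγ₀ : BddAbove (Set.range fun i => ‖w i‖ * γ₀ (e i)) := (Set.finite_range _).bddAbove
    have h1 : γ w ≤ γ₀ w + ε := by
      rw [hcγ w, hc₀ w]
      refine ciSup_le fun i => ?_
      have h2 := le_ciSup hBddγ₀ i
      have h3 := abs_le.mp (key i)
      linarith [h3.2]
    have h2 : γ₀ w ≤ γ w + ε := by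
      rw [hcγ w, hc₀ w]
      refine ciSup_le fun i => ?_
      have h2 := le_ciSup hBddγ i
      have h3 := abs_le.mp (key i)
      linarith [h3.1]
    rw [abs_sub_lt_iff]
    constructor <;> linarith
end

section
/- The map from ℝⁿ modulo the diagonal (i.e. points x = (x₁,…,xₙ) up to adding a common constant) to equivalence classes of norms on Kⁿ, given by x ↦ [γₓ] with γₓ(λ₁,…,λₙ) = maxᵢ |λᵢ| q^{−xᵢ}, is well-defined and injective. -/
/-- The map from points of the apartment (real n-tuples up to a common additive
constant) to homothety classes of canonical norms is well-defined and injective. -/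
theorem apartment_to_norm_classes_wellDefined_injective
    {K : Type*} [NontriviallyNormedField K] {n : ℕ}
    (q : ℝ) (hq : 1 < q) (x y : Fin n → ℝ)
    (γ : (Fin n → ℝ) → ((Fin n → K) → ℝ))
    (hγ : ∀ (z : Fin n → ℝ) (lam : Fin n → K),
      γ z lam = ⨆ i, ‖lam i‖ * q ^ (-(z i))) :
    (∃ c : ℝ, ∀ i, y i = x i + c) ↔
      (∃ d : ℝ, 0 < d ∧ ∀ lam : Fin n → K, γ y lam = d * γ x lam) := by
  have hq0 : (0:ℝ) < q := lt_trans one_pos hq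
  have key : ∀ (z : Fin n → ℝ) (i : Fin n), γ z (Pi.single i 1) = q ^ (-(z i)) := by
    intro z i
    rw [hγ]
    have : Nonempty (Fin n) := ⟨i⟩
    apply le_antisymm
    · apply ciSup_le
      intro j
      by_cases h : j = i
      · subst h; simp
      · simp [Pi.single_apply, h, Real.rpow_natCast]
        positivity
    · have := le_ciSup (f := fun j => ‖(Pi.single i (1:K) : Fin n → K) j‖ * q ^ (-(z j)))
        (Finite.bddAbove_range _) i
      simpa using this
  constructor
  · rintro ⟨c, hc⟩
    refine ⟨q ^ (-c), Real.rpow_pos_of_pos hq0 _, fun lam => ?_⟩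
    rw [hγ, hγ, Real.mul_iSup_of_nonneg (Real.rpow_pos_of_pos hq0 _).le]
    congr 1; funext i
    rw [hc i, neg_add, Real.rpow_add hq0]
    ring
  · rintro ⟨d, hd, hlam⟩
    refine ⟨-Real.logb q d, fun i => ?_⟩
    have h := hlam (Pi.single i 1)
    rw [key, key] at h
    have hlog := congrArg Real.log h
    rw [Real.log_rpow hq0, Real.log_mul hd.ne' (Real.rpow_pos_of_pos hq0 _).ne',
      Real.log_rpow hq0] at hlog
    have hlq : Real.log q ≠ 0 := by
      have := Real.log_pos hq; linarith
    rw [Real.logb]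
    field_simp
    linarith
end
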